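/- Let u be a tempered generalized stochastic process on ℝᵈ and let ν : ℝᵈ → [0,∞) be continuous and polynomially bounded, with E( (u,φ)·conj((u,ψ)) ) = ∫_{ℝᵈ} ψ(x)·conj(φ(x))·ν(−x) dx for all φ, ψ ∈ 𝒮(ℝᵈ;ℂ) (u is frequency stationary: its covariance operator is multiplication by x ↦ ν(−x)). Then for all f, g ∈ 𝒮(ℝᵈ;ℂ): E( (u,f)·conj((u,g)) ) = (2π)^{-d/2} ∫_{ℝ²ᵈ} ν(−x)·conj( W(f,g)(x,ξ) ) dx dξ; that is, the Wigner spectrum of u equals (2π)^{-d/2}·(ν∘(−id) ⊗ 1). -/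

import Mathlib

open MeasureTheory ProbabilityTheory ComplexConjugate
open FourierTransform Real

noncomputable section

/-- `ℝᵈ` as a Euclidean space. -/
abbrev Ed (d : ℕ) := EuclideanSpace ℝ (Fin d)

/-- The cross-Wigner distribution of two Schwartz functions on `ℝᵈ`:
`W(f,g)(x,ξ) = (2π)^{-d/2} ∫ f(x+y/2) conj(g(x−y/2)) e^{-i⟨y,ξ⟩} dy`. -/
def wig {d : ℕ} (f g : SchwartzMap (Ed d) ℂ) (x ξ : Ed d) : ℂ :=
  (((2 * Real.pi) ^ (-(d : ℝ) / 2) : ℝ) : ℂ) *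
    ∫ y : Ed d, f (x + (2 : ℝ)⁻¹ • y) * conj (g (x - (2 : ℝ)⁻¹ • y)) *
      Complex.exp (-((inner ℝ y ξ : ℝ) : ℂ) * Complex.I)

lemma schwartz_tg {d : ℕ} (g : SchwartzMap (Ed d) ℂ) : Function.HasTemperateGrowth ⇑g := by
  refine ⟨g.smooth', fun n => ⟨0, SchwartzMap.seminorm ℝ 0 n g, fun x => ?_⟩⟩
  simpa using g.le_seminorm ℝ 0 n x

lemma affine_tg {d : ℕ} (c : Ed d) (a : ℝ) :
    Function.HasTemperateGrowth (fun y : Ed d => c + a • y) := by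
  apply Function.HasTemperateGrowth.of_fderiv (k := 1) (C := ‖c‖ + |a|)
  · have : (fderiv ℝ fun y : Ed d => c + a • y) =
        fun _ => a • ContinuousLinearMap.id ℝ (Ed d) := by
      funext y
      rw [fderiv_const_add]
      rw [show (HSMul.hSMul a : Ed d → Ed d) = (fun y : Ed d => a • id y) from rfl,
        fderiv_fun_const_smul differentiableAt_id a, fderiv_id]
    rw [this]
    exact .const _
  · exact (differentiable_const _).add (differentiable_id.fun_const_smul _)
  · intro x
    have h1 : ‖c + a • x‖ ≤ ‖c‖ + |a| * ‖x‖ := by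
      refine (norm_add_le _ _).trans ?_
      rw [norm_smul]; simp [Real.norm_eq_abs]
    nlinarith [norm_nonneg x, norm_nonneg c, abs_nonneg a]

lemma affine_upper {d : ℕ} (x : Ed d) (a : ℝ) (ha : |a| = 2⁻¹) :
    ∃ (k : ℕ) (C : ℝ), ∀ y : Ed d, ‖y‖ ≤ C * (1 + ‖x + a • y‖) ^ k := by
  refine ⟨1, 2 * ‖x‖ + 2, fun y => ?_⟩
  have h1 : ‖a • y‖ = 2⁻¹ * ‖y‖ := by rw [norm_smul, Real.norm_eq_abs, ha]
  have h2 : ‖a • y‖ ≤ ‖x + a • y‖ + ‖x‖ := by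
    calc ‖a • y‖ = ‖(x + a • y) - x‖ := by rw [add_sub_cancel_left]
    _ ≤ ‖x + a • y‖ + ‖x‖ := norm_sub_le _ _
  rw [pow_one]
  nlinarith [norm_nonneg x, norm_nonneg (x + a • y), norm_nonneg y]

/-- the bilinear map `(a,b) ↦ a * conj b` -/
def Bmul : ℂ →L[ℝ] ℂ →L[ℝ] ℂ :=
  ((ContinuousLinearMap.mul ℝ ℂ).flip.comp
    Complex.conjCLE.toContinuousLinearMap).flip

@[simp] lemma Bmul_apply (a b : ℂ) : Bmul a b = a * conj b := rfl

section key
variable {d : ℕ} (f g : SchwartzMap (Ed d) ℂ) (x : Ed d)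

/-- the Schwartz function `y ↦ f (x + y/2) * conj (g (x - y/2))` -/
def hx : SchwartzMap (Ed d) ℂ :=
  SchwartzMap.bilinLeftCLM Bmul
    (schwartz_tg (SchwartzMap.compCLM ℝ (affine_tg x (-2⁻¹))
      (affine_upper x (-2⁻¹) (by norm_num)) g))
    (SchwartzMap.compCLM ℝ (affine_tg x 2⁻¹) (affine_upper x 2⁻¹ (by norm_num)) f)

lemma hx_apply (y : Ed d) :
    hx f g x y = f (x + (2:ℝ)⁻¹ • y) * conj (g (x - (2:ℝ)⁻¹ • y)) := by
  show Bmul (f (x + (2:ℝ)⁻¹ • y)) (g (x + (-2⁻¹ : ℝ) • y)) = _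
  rw [Bmul_apply]
  congr 2
  rw [neg_smul, ← sub_eq_add_neg]

lemma step1 (ξ : Ed d) :
    (∫ y : Ed d, f (x + (2 : ℝ)⁻¹ • y) * conj (g (x - (2 : ℝ)⁻¹ • y)) *
      Complex.exp (-((inner ℝ y ξ : ℝ) : ℂ) * Complex.I)) =
    𝓕 ⇑(hx f g x) ((2 * Real.pi)⁻¹ • ξ) := by
  rw [Real.fourier_eq']
  refine integral_congr_ae (Filter.Eventually.of_forall fun y => ?_)
  have h2 : (-2 * Real.pi * (inner ℝ y ((2 * Real.pi)⁻¹ • ξ) : ℝ)) = -(inner ℝ y ξ : ℝ) := by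
    rw [real_inner_smul_right]
    have hne : (2 * Real.pi) ≠ 0 := by positivity
    field_simp
  show f (x + (2:ℝ)⁻¹ • y) * conj (g (x - (2:ℝ)⁻¹ • y)) *
      Complex.exp (-((inner ℝ y ξ : ℝ) : ℂ) * Complex.I) =
    Complex.exp (((-2 * Real.pi * (inner ℝ y ((2 * Real.pi)⁻¹ • ξ) : ℝ) : ℝ) : ℂ) * Complex.I) •
      hx f g x y
  rw [h2, hx_apply, smul_eq_mul]
  push_cast
  ring

lemma wig_xi_integral :
    (∫ ξ : Ed d, wig f g x ξ) =
      (((2 * Real.pi) ^ (-(d : ℝ) / 2) : ℝ) : ℂ) * ((2 * Real.pi) ^ d : ℝ) *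
        (f x * conj (g x)) := by
  have hF : Integrable (𝓕 ⇑(hx f g x)) := by
    have := (SchwartzMap.fourierTransformCLM ℝ (hx f g x)).integrable (μ := volume)
    exact this
  have hinv := Continuous.fourierInv_fourier_eq (hx f g x).continuous
    ((hx f g x).integrable) hF
  have h0 : (∫ ξ : Ed d, 𝓕 ⇑(hx f g x) ξ) = f x * conj (g x) := by
    have := congrFun hinv 0
    rw [Real.fourierInv_eq'] at this
    simp only [inner_zero_right, mul_zero, Complex.ofReal_zero, zero_mul, Complex.exp_zero,
      one_smul] at this
    rw [this, hx_apply]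
    simp
  calc (∫ ξ : Ed d, wig f g x ξ)
      = (((2 * Real.pi) ^ (-(d : ℝ) / 2) : ℝ) : ℂ) *
        ∫ ξ : Ed d, 𝓕 ⇑(hx f g x) ((2 * Real.pi)⁻¹ • ξ) := by
        rw [← integral_const_mul]
        refine integral_congr_ae (Filter.Eventually.of_forall fun ξ => ?_)
        rw [wig, step1]
    _ = _ := by
        rw [MeasureTheory.Measure.integral_comp_inv_smul volume _ (2 * Real.pi), h0]
        have hd : Module.finrank ℝ (Ed d) = d := finrank_euclideanSpace_fin
        rw [hd, abs_of_nonneg (by positivity), Complex.real_smul]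
        ring
end key

theorem stmt11 {Ω : Type} [MeasurableSpace Ω] (P : Measure Ω) [IsProbabilityMeasure P]
    {d : ℕ} (u : SchwartzMap (Ed d) ℂ →L⋆[ℂ] Lp ℂ 2 P)
    (ν : Ed d → ℝ) (hν0 : ∀ x, 0 ≤ ν x) (hνc : Continuous ν)
    (hνb : ∃ C > 0, ∃ N : ℕ, ∀ x : Ed d, |ν x| ≤ C * (1 + ‖x‖) ^ N)
    -- `u` is frequency stationary: its covariance operator is multiplication by `x ↦ ν(−x)`
    (hfs : ∀ φ ψ : SchwartzMap (Ed d) ℂ,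
      ∫ ω, u φ ω * conj (u ψ ω) ∂P =
        ∫ x : Ed d, ψ x * conj (φ x) * (ν (-x) : ℂ)) :
    -- the Wigner spectrum of `u` equals `(2π)^{-d/2} (ν∘(−id) ⊗ 1)`
    ∀ f g : SchwartzMap (Ed d) ℂ,
      ∫ ω, u f ω * conj (u g ω) ∂P =
        (((2 * Real.pi) ^ (-(d : ℝ) / 2) : ℝ) : ℂ) *
          ∫ x : Ed d, ∫ ξ : Ed d, (ν (-x) : ℂ) * conj (wig f g x ξ) := by
  intro f g
  rw [hfs f g]
  set c : ℝ := (2 * Real.pi) ^ (-(d : ℝ) / 2) with hc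
  have hinner : ∀ x : Ed d,
      (∫ ξ : Ed d, (ν (-x) : ℂ) * conj (wig f g x ξ)) =
        (ν (-x) : ℂ) * ((c : ℂ) * ((2 * Real.pi) ^ d : ℝ) * (conj (f x) * g x)) := by
    intro x
    rw [integral_const_mul, integral_conj, wig_xi_integral]
    congr 1
    simp only [map_mul, Complex.conj_conj, Complex.conj_ofReal]
    rfl
  have hcc : (c : ℂ) * ((c : ℂ) * ((2 * Real.pi) ^ d : ℝ)) = 1 := by
    have h2 : (0:ℝ) < 2 * Real.pi := by positivity
    have : c * (c * (2 * Real.pi) ^ d) = 1 := by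
      rw [hc, ← Real.rpow_natCast (2 * Real.pi) d, ← Real.rpow_add h2, ← Real.rpow_add h2]
      rw [show (-(d:ℝ)/2 + (-(d:ℝ)/2 + (d:ℝ))) = 0 by ring, Real.rpow_zero]
    calc (c : ℂ) * ((c : ℂ) * ((2 * Real.pi) ^ d : ℝ)) =
        ((c * (c * (2 * Real.pi) ^ d) : ℝ) : ℂ) := by push_cast; ring
      _ = 1 := by rw [this]; norm_num
  calc ∫ x : Ed d, g x * conj (f x) * (ν (-x) : ℂ)
      = (c : ℂ) * ((c : ℂ) * ((2 * Real.pi) ^ d : ℝ)) *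
          ∫ x : Ed d, g x * conj (f x) * (ν (-x) : ℂ) := by rw [hcc, one_mul]
    _ = (c : ℂ) * ∫ x : Ed d, ∫ ξ : Ed d, (ν (-x) : ℂ) * conj (wig f g x ξ) := by
        rw [mul_assoc, ← integral_const_mul]
        congr 1
        refine integral_congr_ae (Filter.Eventually.of_forall fun x => ?_)
        beta_reduce
        rw [hinner x]
        ring


end
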